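/- If a tensor C ∈ ℂ^{M×M×N} has slice-rank r in the third direction, meaning there exist matrices G₁,…,G_r and coefficients c_{k,d} such that C[·,·,k] = Σ_{d=1}^r c_{k,d} G_d for all k, and if at each step the 3D-ACA pivot is nonzero whenever the residual tensor is nonzero, then the 3D-ACA terminates with exact reconstruction after at most r steps applied to the span: each step reduces the dimension of the span of the residual slices {(C − C^{(ℓ)})[·,·,k] : k = 1..N} by at least one. -/

import Mathlib

open Finset

/-- Finite termination of 3D-ACA in at most slice-rank many steps: if the slices of `C` lie in
the span of `r` matrices, then the span of the slices of `C` has dimension at most `r`; and each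
3D-ACA step with nonzero pivot strictly reduces (by at least one) the dimension of the span of
the residual slices. -/
theorem stmt_17 (M N r : ℕ) (C : Fin M → Fin M → Fin N → ℂ)
    (G : Fin r → (Fin M → Fin M → ℂ)) (coef : Fin N → Fin r → ℂ)
    (hrank : ∀ k i j, C i j k = ∑ d : Fin r, coef k d * G d i j)
    (Cprev : Fin M → Fin M → Fin N → ℂ)
    (kℓ : Fin N) (iℓ jℓ : Fin M)
    (hpiv : C iℓ jℓ kℓ - Cprev iℓ jℓ kℓ ≠ 0)
    (fℓ : Fin N → ℂ)
    (hf : ∀ k, fℓ k = (C iℓ jℓ k - Cprev iℓ jℓ k) / (C iℓ jℓ kℓ - Cprev iℓ jℓ kℓ))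
    (Cnew : Fin M → Fin M → Fin N → ℂ)
    (hnew : ∀ i j k, Cnew i j k = Cprev i j k + (C i j kℓ - Cprev i j kℓ) * fℓ k) :
    Module.finrank ℂ
        (Submodule.span ℂ (Set.range (fun k : Fin N => fun i j => C i j k))) ≤ r ∧
    Module.finrank ℂ
        (Submodule.span ℂ (Set.range (fun k : Fin N => fun i j => C i j k - Cnew i j k))) + 1
      ≤ Module.finrank ℂ
          (Submodule.span ℂ (Set.range (fun k : Fin N => fun i j => C i j k - Cprev i j k))) := by
  classical
  constructor
  · -- Part 1: slices lie in span of the `G d`.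
    have hle : Submodule.span ℂ (Set.range (fun k : Fin N => fun i j => C i j k)) ≤
        Submodule.span ℂ (Set.range G) := by
      rw [Submodule.span_le]
      rintro _ ⟨k, rfl⟩
      have : (fun i j => C i j k) = ∑ d : Fin r, coef k d • G d := by
        funext i j
        simp [hrank k i j, Finset.sum_apply]
      show (fun i j => C i j k) ∈ (Submodule.span ℂ (Set.range G) : Submodule ℂ _)
      rw [this]
      exact Submodule.sum_mem _ fun d _ =>
        Submodule.smul_mem _ _ (Submodule.subset_span ⟨d, rfl⟩)
    have h2 : Module.finrank ℂ (Submodule.span ℂ (Set.range G)) ≤ r := by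
      simpa [Set.finrank] using finrank_range_le_card (R := ℂ) G
    exact le_trans (Submodule.finrank_mono hle) h2
  · -- Part 2
    set E : Fin N → (Fin M → Fin M → ℂ) := fun k i j => C i j k - Cprev i j k with hE
    set F : Fin N → (Fin M → Fin M → ℂ) := fun k i j => C i j k - Cnew i j k with hF
    have hFE : ∀ k, F k = E k - fℓ k • E kℓ := by
      intro k; funext i j
      simp only [hF, hE, hnew, Pi.sub_apply, Pi.smul_apply, smul_eq_mul]
      ring
    set p : ℂ := C iℓ jℓ kℓ - Cprev iℓ jℓ kℓ with hp
    -- evaluation functional at (iℓ, jℓ)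
    set φ : (Fin M → Fin M → ℂ) →ₗ[ℂ] ℂ :=
      (LinearMap.proj (R := ℂ) (φ := fun _ : Fin M => ℂ) jℓ).comp
        (LinearMap.proj (R := ℂ) (φ := fun _ : Fin M => Fin M → ℂ) iℓ) with hφ
    have hφE : φ (E kℓ) = p := rfl
    have hφF : ∀ k, φ (F k) = 0 := by
      intro k
      have : φ (F k) = E k iℓ jℓ - fℓ k * E kℓ iℓ jℓ := by
        rw [hFE k]; rfl
      rw [this, hf k]
      have hEk : E kℓ iℓ jℓ = p := rfl
      rw [hEk]
      field_simp
      exact sub_eq_zero.mpr rfl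
    set W : Submodule ℂ (Fin M → Fin M → ℂ) := Submodule.span ℂ (Set.range E) with hW
    set W' : Submodule ℂ (Fin M → Fin M → ℂ) := Submodule.span ℂ (Set.range F) with hW'
    have hW'ker : W' ≤ LinearMap.ker φ := by
      rw [hW', Submodule.span_le]
      rintro _ ⟨k, rfl⟩
      exact hφF k
    have hEkl : E kℓ ∈ W := Submodule.subset_span ⟨kℓ, rfl⟩
    have hW'W : W' ≤ W := by
      rw [hW', Submodule.span_le]
      rintro _ ⟨k, rfl⟩
      rw [hFE k]
      exact Submodule.sub_mem _ (Submodule.subset_span ⟨k, rfl⟩)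
        (Submodule.smul_mem _ _ hEkl)
    have hEne : E kℓ ≠ 0 := by
      intro h
      apply hpiv
      have := congrFun (congrFun h iℓ) jℓ
      simpa [hE] using this
    have hdisj : Disjoint W' (Submodule.span ℂ {E kℓ}) := by
      rw [Submodule.disjoint_def]
      intro x hx hx'
      rcases Submodule.mem_span_singleton.mp hx' with ⟨c, rfl⟩
      have h0 : φ (c • E kℓ) = 0 := hW'ker hx
      rw [map_smul, hφE, smul_eq_mul] at h0
      rcases mul_eq_zero.mp h0 with hc | hc
      · rw [hc, zero_smul]
      · exact absurd hc hpiv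
    have hsup : W' ⊔ Submodule.span ℂ {E kℓ} ≤ W := by
      apply sup_le hW'W
      rw [Submodule.span_le]
      simpa using hEkl
    have hfr : Module.finrank ℂ W' + 1 =
        Module.finrank ℂ (W' ⊔ Submodule.span ℂ {E kℓ} : Submodule ℂ _) := by
      rw [← finrank_span_singleton (K := ℂ) hEne,
        ← Submodule.finrank_sup_add_finrank_inf_eq W' (Submodule.span ℂ {E kℓ}),
        hdisj.eq_bot, finrank_bot, add_zero]
    rw [hfr]
    exact Submodule.finrank_mono hsup
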